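/- Let p = (p₁, …, pₙ) ∈ Dist(R_n, m) be a distribution on the rose graph with n loops and m outcomes, and for each i let H_i be the bipartite simple graph on {u_0, …, u_{m−1}} ⊔ {w_0, …, w_{m−1}} with an edge between u_a and w_b iff (p_i)_{ab} ≠ 0. Then p is an extreme point of Dist(R_n, m) if and only if: (1) every H_i contains no cycle, and (2) the linear subspace K̃ := {(α, β) ∈ ℝ^m × ℝ^m : α = β, and for every i and every connected component C of H_i (including singleton components), Σ_{a : u_a ∈ C} α_a = Σ_{b : w_b ∈ C} β_b} has dimension exactly 1. (K̃ is the kernel of the matrix Q̃(H₁, …, Hₙ) of the paper, obtained from Q(H₁, …, Hₙ) by appending the m rows enforcing α_a = β_a; condition (2) is equivalent to rank Q̃(H₁, …, Hₙ) = 2m − 1.) -/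

import Mathlib

/-- The polytope `Dist(R_n, m)` of distributions on the rose graph with `n`
loops and `m` outcomes: tuples of `m × m` matrices with nonnegative entries
summing to `1`, such that a single vector `μ` equals both the row-sum vector
and the column-sum vector of every matrix. -/
def RoseDist (n m : ℕ) : Set (Fin n → Matrix (Fin m) (Fin m) ℝ) :=
  {p | (∀ i a b, 0 ≤ p i a b) ∧ (∀ i, ∑ a, ∑ b, p i a b = 1) ∧
       ∃ μ : Fin m → ℝ, ∀ i,
         (∀ a, ∑ b, p i a b = μ a) ∧ (∀ b, ∑ a, p i a b = μ b)}

/-- The bipartite graph associated to an `m × m` matrix `q`: vertices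
`Sum.inl a` (left, `u_a`) and `Sum.inr b` (right, `w_b`), with an edge between
`u_a` and `w_b` iff `q a b ≠ 0`. -/
def Hmat {m : ℕ} (q : Matrix (Fin m) (Fin m) ℝ) : SimpleGraph (Fin m ⊕ Fin m) :=
  SimpleGraph.fromRel (fun v w =>
    ∃ a b : Fin m, q a b ≠ 0 ∧ v = Sum.inl a ∧ w = Sum.inr b)


open scoped Classical

namespace Rose

variable {m : ℕ} {q : Matrix (Fin m) (Fin m) ℝ}

lemma hmat_adj {a b : Fin m} : (Hmat q).Adj (Sum.inl a) (Sum.inr b) ↔ q a b ≠ 0 := by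
  constructor
  · rintro ⟨hne, ⟨a', b', hq, h1, h2⟩ | ⟨a', b', hq, h1, h2⟩⟩
    · cases Sum.inl.inj h1; cases Sum.inr.inj h2; exact hq
    · exact absurd h1 (by simp)
  · intro hq
    exact ⟨by simp, Or.inl ⟨a, b, hq, rfl, rfl⟩⟩

lemma hmat_adj_cases {v w : Fin m ⊕ Fin m} (h : (Hmat q).Adj v w) :
    (∃ a b, q a b ≠ 0 ∧ v = Sum.inl a ∧ w = Sum.inr b) ∨
    (∃ a b, q a b ≠ 0 ∧ v = Sum.inr b ∧ w = Sum.inl a) := by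
  rcases h with ⟨hne, ⟨a, b, hq, h1, h2⟩ | ⟨a, b, hq, h1, h2⟩⟩
  · exact Or.inl ⟨a, b, hq, h1, h2⟩
  · exact Or.inr ⟨a, b, hq, h2, h1⟩

/-- helper: sums of `ite` are additive in the value. -/
lemma sum_ite_sub {P : Fin m → Prop} [DecidablePred P] (x y : Fin m → ℝ) :
    (∑ a, if P a then x a - y a else 0)
      = (∑ a, if P a then x a else 0) - ∑ a, if P a then y a else 0 := by
  rw [← Finset.sum_sub_distrib]
  refine Finset.sum_congr rfl fun a _ => ?_
  split <;> simp

lemma sum_ite_mul {P : Fin m → Prop} [DecidablePred P] (x : Fin m → ℝ) (c : ℝ) :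
    (∑ a, if P a then c * x a else 0) = c * ∑ a, if P a then x a else 0 := by
  rw [Finset.mul_sum]
  refine Finset.sum_congr rfl fun a _ => ?_
  split <;> simp
/-- Lemma A: a matrix supported on an acyclic support graph with zero row and
column sums is zero. -/
lemma lemA (hac : (Hmat q).IsAcyclic) (d : Matrix (Fin m) (Fin m) ℝ)
    (hsupp : ∀ a b, q a b = 0 → d a b = 0)
    (hrow : ∀ a, ∑ b, d a b = 0) (hcol : ∀ b, ∑ a, d a b = 0) :
    d = 0 := by
  ext a₀ b₀
  simp only [Matrix.zero_apply]
  by_cases hq : q a₀ b₀ = 0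
  · exact hsupp a₀ b₀ hq
  have hadj : (Hmat q).Adj (Sum.inl a₀) (Sum.inr b₀) := hmat_adj.mpr hq
  have hbr := (SimpleGraph.isAcyclic_iff_forall_adj_isBridge.mp hac) hadj
  rw [SimpleGraph.isBridge_iff] at hbr
  set G' := Hmat q \ SimpleGraph.fromEdgeSet {s(Sum.inl a₀, Sum.inr b₀)} with hG'
  set U : (Fin m ⊕ Fin m) → Prop := fun x => G'.Reachable (Sum.inl a₀) x with hU
  -- the weighted sum
  have key : ∑ a, ∑ b, d a b * ((if U (Sum.inl a) then (1:ℝ) else 0) - (if U (Sum.inr b) then 1 else 0)) = 0 := by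
    have e1 : ∀ a : Fin m, ∑ b, d a b * (if U (Sum.inl a) then (1:ℝ) else 0) = (if U (Sum.inl a) then (1:ℝ) else 0) * ∑ b, d a b := by
      intro a; rw [Finset.mul_sum]; exact Finset.sum_congr rfl fun b _ => mul_comm _ _
    have e2 : ∑ a, ∑ b, d a b * (if U (Sum.inr b) then (1:ℝ) else 0) = ∑ b, (if U (Sum.inr b) then (1:ℝ) else 0) * ∑ a, d a b := by
      rw [Finset.sum_comm]
      exact Finset.sum_congr rfl fun b _ => by rw [Finset.mul_sum]; exact Finset.sum_congr rfl fun a _ => mul_comm _ _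
    simp only [mul_sub, Finset.sum_sub_distrib, e1, e2, hrow, hcol, mul_zero,
      Finset.sum_const_zero, sub_zero]
  -- all terms vanish except (a₀, b₀)
  have term : ∀ a b, d a b * ((if U (Sum.inl a) then (1:ℝ) else 0) - (if U (Sum.inr b) then 1 else 0)) =
      if a = a₀ ∧ b = b₀ then d a₀ b₀ else 0 := by
    intro a b
    by_cases hab : a = a₀ ∧ b = b₀
    · obtain ⟨rfl, rfl⟩ := hab
      have h1 : U (Sum.inl a) := SimpleGraph.Reachable.refl _
      have h2 : ¬ U (Sum.inr b) := hbr
      rw [if_pos h1, if_neg h2, if_pos ⟨rfl, rfl⟩]; ring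
    · rw [if_neg hab]
      by_cases hd : d a b = 0
      · rw [hd, zero_mul]
      · have hq' : q a b ≠ 0 := fun h => hd (hsupp a b h)
        have hne : s(Sum.inl a, Sum.inr b) ≠ s(Sum.inl a₀, Sum.inr b₀) := by
          intro h
          rw [Sym2.eq_iff] at h
          rcases h with ⟨h1, h2⟩ | ⟨h1, h2⟩
          · exact hab ⟨Sum.inl.inj h1, Sum.inr.inj h2⟩
          · exact absurd h1 (by simp)
        have hadj' : G'.Adj (Sum.inl a) (Sum.inr b) := by
          rw [hG']
          refine ⟨hmat_adj.mpr hq', ?_⟩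
          rw [SimpleGraph.fromEdgeSet_adj]
          rintro ⟨h1, -⟩
          exact hne h1
        have : U (Sum.inl a) ↔ U (Sum.inr b) := by
          constructor
          · intro h; exact h.trans hadj'.reachable
          · intro h; exact h.trans hadj'.symm.reachable
        by_cases hu : U (Sum.inl a)
        · rw [if_pos hu, if_pos (this.mp hu)]; ring
        · rw [if_neg hu, if_neg (fun h => hu (this.mpr h))]; ring
  rw [Finset.sum_congr rfl (fun a _ => Finset.sum_congr rfl fun b _ => term a b)] at key
  classical
  simpa [ite_and, Finset.sum_ite_eq, Finset.sum_ite_eq'] using key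

/-- The margins linear map. -/
noncomputable def marginsLM (m : ℕ) : Matrix (Fin m) (Fin m) ℝ →ₗ[ℝ] (Fin m → ℝ) × (Fin m → ℝ) where
  toFun d := (fun a => ∑ b, d a b, fun b => ∑ a, d a b)
  map_add' d e := by
    ext x <;> simp [Finset.sum_add_distrib]
  map_smul' c d := by
    ext x <;> simp [Finset.mul_sum]

/-- Matrices supported on the support of `q`. -/
def suppSub (q : Matrix (Fin m) (Fin m) ℝ) : Submodule ℝ (Matrix (Fin m) (Fin m) ℝ) where
  carrier := {d | ∀ a b, q a b = 0 → d a b = 0}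
  add_mem' {d e} hd he a b h := by simp [Matrix.add_apply, hd a b h, he a b h]
  zero_mem' := fun a b _ => rfl
  smul_mem' c d hd a b h := by simp [Matrix.smul_apply, hd a b h]

lemma reachable_constant {f : (Fin m ⊕ Fin m) → ℝ}
    (hf : ∀ a b, q a b ≠ 0 → f (Sum.inl a) = f (Sum.inr b))
    {u v : Fin m ⊕ Fin m} (h : (Hmat q).Reachable u v) : f u = f v := by
  obtain ⟨w⟩ := h
  induction w with
  | nil => rfl
  | cons hadj w ih =>
    refine Eq.trans ?_ ih
    rcases hmat_adj_cases hadj with ⟨a, b, hq, rfl, rfl⟩ | ⟨a, b, hq, rfl, rfl⟩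
    · exact hf a b hq
    · exact (hf a b hq).symm

/-- Lemma B: surjectivity of the margin map onto pairs satisfying the
component conditions. -/
lemma lemB (α β : Fin m → ℝ)
    (hcond : ∀ v, (∑ a, if (Hmat q).Reachable v (Sum.inl a) then α a else 0)
      = ∑ b, if (Hmat q).Reachable v (Sum.inr b) then β b else 0) :
    ∃ d : Matrix (Fin m) (Fin m) ℝ, (∀ a b, q a b = 0 → d a b = 0) ∧
      (∀ a, ∑ b, d a b = α a) ∧ (∀ b, ∑ a, d a b = β b) := by
  have hmem : (α, β) ∈ (suppSub q).map (marginsLM m) := by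
    rw [← Subspace.forall_mem_dualAnnihilator_apply_eq_zero_iff]
    intro φ hφ
    set A : Fin m → ℝ := fun a => φ (Pi.single a 1, 0) with hA
    set B : Fin m → ℝ := fun b => φ (0, Pi.single b 1) with hB
    -- the margin of a standard basis matrix
    have hstd : ∀ a b : Fin m, marginsLM m (Matrix.single a b 1)
        = (Pi.single a 1, 0) + (0, Pi.single b 1) := by
      intro a b
      have h1 : (fun a' => ∑ b', Matrix.single a b (1:ℝ) a' b') = Pi.single a 1 := by
        funext a'
        simp [Matrix.single, ite_and, Pi.single_apply, eq_comm]
      have h2 : (fun b' => ∑ a', Matrix.single a b (1:ℝ) a' b') = Pi.single b 1 := by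
        funext b'
        simp [Matrix.single, ite_and, Pi.single_apply, eq_comm]
      refine Prod.ext ?_ ?_ <;> simp [marginsLM, h1, h2]
    -- edge relation
    have hedge : ∀ a b : Fin m, q a b ≠ 0 → A a + B b = 0 := by
      intro a b hq
      have hD : Matrix.single a b (1:ℝ) ∈ suppSub q := by
        intro a' b' h
        by_cases hab : a = a' ∧ b = b'
        · exact absurd (hab.1 ▸ hab.2 ▸ h) hq
        · simp [Matrix.single, hab]
      have hW : marginsLM m (Matrix.single a b 1) ∈ (suppSub q).map (marginsLM m) :=
        Submodule.mem_map_of_mem hD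
      have h0 := (Submodule.mem_dualAnnihilator φ).mp hφ _ hW
      rw [hstd, map_add] at h0
      exact h0
    set f : (Fin m ⊕ Fin m) → ℝ := Sum.elim A (fun b => -B b) with hf
    have hfc : ∀ {u v}, (Hmat q).Reachable u v → f u = f v := by
      intro u v h
      refine reachable_constant (fun a b hq => ?_) h
      have := hedge a b hq
      simp only [hf, Sum.elim_inl, Sum.elim_inr]
      linarith
    set N : (Fin m ⊕ Fin m) → ℝ :=
      fun v => ((Finset.univ.filter fun x => (Hmat q).Reachable v x).card : ℝ) with hN
    have hNpos : ∀ v, 0 < N v := by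
      intro v
      have : v ∈ Finset.univ.filter fun x => (Hmat q).Reachable v x :=
        Finset.mem_filter.mpr ⟨Finset.mem_univ v, SimpleGraph.Reachable.refl v⟩
      simp only [hN]
      exact_mod_cast Finset.card_pos.mpr ⟨v, this⟩
    have hNconst : ∀ {u v}, (Hmat q).Reachable u v → N u = N v := by
      intro u v h
      have hfeq : (Finset.univ.filter fun x => (Hmat q).Reachable u x)
          = (Finset.univ.filter fun x => (Hmat q).Reachable v x) := by
        apply Finset.filter_congr
        intro x _
        exact ⟨fun h' => (h.symm.trans h' : _), fun h' => h.trans h'⟩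
      show ((Finset.univ.filter fun x => (Hmat q).Reachable u x).card : ℝ) = _
      rw [hfeq]
    -- component sum lemma
    have compsum : ∀ u : Fin m ⊕ Fin m,
        (∑ v, if (Hmat q).Reachable v u then f v / N v else 0) = f u := by
      intro u
      have step : ∀ v, (if (Hmat q).Reachable v u then f v / N v else 0)
          = (if (Hmat q).Reachable u v then f u / N u else 0) := by
        intro v
        by_cases h : (Hmat q).Reachable v u
        · rw [if_pos h, if_pos h.symm, hfc h.symm, hNconst h.symm]
        · rw [if_neg h, if_neg (fun h' => h h'.symm)]
      rw [Finset.sum_congr rfl fun v _ => step v, ← Finset.sum_filter,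
        Finset.sum_const, nsmul_eq_mul]
      rw [show ((Finset.univ.filter fun x => (Hmat q).Reachable u x).card : ℝ) = N u from rfl]
      field_simp [ne_of_gt (hNpos u)]
    -- the double-sum computation
    have doubleL : (∑ v, (f v / N v) * ∑ a, if (Hmat q).Reachable v (Sum.inl a) then α a else 0)
        = ∑ a, α a * f (Sum.inl a) := by
      rw [Finset.sum_congr rfl (fun v _ => Finset.mul_sum _ _ _)]
      rw [Finset.sum_comm]
      refine Finset.sum_congr rfl fun a _ => ?_
      have : ∀ v, (f v / N v) * (if (Hmat q).Reachable v (Sum.inl a) then α a else 0)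
          = (if (Hmat q).Reachable v (Sum.inl a) then f v / N v else 0) * α a := by
        intro v; by_cases h : (Hmat q).Reachable v (Sum.inl a) <;> simp [h, mul_comm]
      rw [Finset.sum_congr rfl fun v _ => this v, ← Finset.sum_mul, compsum, mul_comm]
    have doubleR : (∑ v, (f v / N v) * ∑ b, if (Hmat q).Reachable v (Sum.inr b) then β b else 0)
        = ∑ b, β b * f (Sum.inr b) := by
      rw [Finset.sum_congr rfl (fun v _ => Finset.mul_sum _ _ _)]
      rw [Finset.sum_comm]
      refine Finset.sum_congr rfl fun b _ => ?_
      have : ∀ v, (f v / N v) * (if (Hmat q).Reachable v (Sum.inr b) then β b else 0)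
          = (if (Hmat q).Reachable v (Sum.inr b) then f v / N v else 0) * β b := by
        intro v; by_cases h : (Hmat q).Reachable v (Sum.inr b) <;> simp [h, mul_comm]
      rw [Finset.sum_congr rfl fun v _ => this v, ← Finset.sum_mul, compsum, mul_comm]
    have hsums : ∑ a, α a * f (Sum.inl a) = ∑ b, β b * f (Sum.inr b) := by
      rw [← doubleL, ← doubleR]
      exact Finset.sum_congr rfl fun v _ => by rw [hcond v]
    -- decompose (α, β)
    have hdecomp : ((α, β) : (Fin m → ℝ) × (Fin m → ℝ))
        = (∑ a, α a • ((Pi.single a 1, 0) : (Fin m → ℝ) × (Fin m → ℝ)))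
          + ∑ b, β b • ((0, Pi.single b 1) : (Fin m → ℝ) × (Fin m → ℝ)) := by
      refine Prod.ext ?_ ?_ <;>
      · funext x
        simp [Prod.fst_sum, Prod.snd_sum, Finset.sum_apply, Pi.single_apply,
          mul_ite, mul_one, mul_zero, Finset.sum_ite_eq]
    rw [hdecomp, map_add, map_sum, map_sum]
    simp only [map_smul, smul_eq_mul]
    have hAx : ∀ x, φ (Pi.single x 1, 0) = A x := fun _ => rfl
    have hBx : ∀ x, φ ((0 : Fin m → ℝ), Pi.single x 1) = B x := fun _ => rfl
    simp only [hAx, hBx]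
    simp only [hf, Sum.elim_inl, Sum.elim_inr] at hsums
    rw [hsums]
    simp [mul_neg, Finset.sum_neg_distrib]
  obtain ⟨d, hd, hmar⟩ := hmem
  refine ⟨d, hd, fun a => ?_, fun b => ?_⟩
  · exact congrFun (congrArg Prod.fst hmar) a
  · exact congrFun (congrArg Prod.snd hmar) b

/-- single step matrix -/
noncomputable def stepMat : (Fin m ⊕ Fin m) → (Fin m ⊕ Fin m) → Matrix (Fin m) (Fin m) ℝ
  | Sum.inl a, Sum.inr b => Matrix.single a b 1
  | Sum.inr b, Sum.inl a => -(Matrix.single a b 1)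
  | _, _ => 0

/-- matrix associated to a walk, with alternating signs -/
noncomputable def walkMat : ∀ {u v : Fin m ⊕ Fin m}, (Hmat q).Walk u v → Matrix (Fin m) (Fin m) ℝ
  | _, _, SimpleGraph.Walk.nil => 0
  | _, _, @SimpleGraph.Walk.cons _ _ u u' _ _ w => stepMat u u' + walkMat w

/-- margins of a matrix as a function on the sum type -/
noncomputable def marg (d : Matrix (Fin m) (Fin m) ℝ) : (Fin m ⊕ Fin m) → ℝ :=
  Sum.elim (fun a => ∑ b, d a b) (fun b => ∑ a, d a b)

lemma marg_add (d e : Matrix (Fin m) (Fin m) ℝ) : marg (d + e) = marg d + marg e := by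
  funext x
  cases x <;> simp [marg, Finset.sum_add_distrib]

noncomputable def sgn : (Fin m ⊕ Fin m) → ℝ := Sum.elim (fun _ => 1) (fun _ => -1)

noncomputable def dv (u : Fin m ⊕ Fin m) : (Fin m ⊕ Fin m) → ℝ := fun x => if x = u then 1 else 0

lemma marg_std (a b : Fin m) :
    marg (Matrix.single a b (1:ℝ)) = dv (Sum.inl a) + dv (Sum.inr b) := by
  funext x
  cases x with
  | inl a' =>
    simp [marg, dv, Matrix.single, ite_and, eq_comm]
  | inr b' =>
    simp [marg, dv, Matrix.single, ite_and, eq_comm]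

lemma marg_step {u v : Fin m ⊕ Fin m} (h : (Hmat q).Adj u v) :
    marg (stepMat u v) = sgn u • dv u - sgn v • dv v := by
  rcases hmat_adj_cases h with ⟨a, b, hq, rfl, rfl⟩ | ⟨a, b, hq, rfl, rfl⟩
  · rw [show stepMat (Sum.inl a) (Sum.inr b) = Matrix.single a b (1:ℝ) from rfl, marg_std]
    funext x
    simp [sgn, dv]
    try ring
  · rw [show stepMat (Sum.inr b) (Sum.inl a) = -(Matrix.single a b (1:ℝ)) from rfl]
    have : marg (-(Matrix.single a b (1:ℝ))) = -marg (Matrix.single a b (1:ℝ)) := by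
      funext x
      cases x <;> simp [marg, Finset.sum_neg_distrib]
    rw [this, marg_std]
    funext x
    simp [sgn, dv]
    try ring

lemma marg_walkMat : ∀ {u v : Fin m ⊕ Fin m} (w : (Hmat q).Walk u v),
    marg (walkMat w) = sgn u • dv u - sgn v • dv v
  | _, _, SimpleGraph.Walk.nil => by
    funext x
    cases x <;> simp [walkMat, marg]
  | _, _, @SimpleGraph.Walk.cons _ _ u u' v h w => by
    show marg (stepMat u u' + walkMat w) = _
    rw [marg_add, marg_step h, marg_walkMat w]
    abel

lemma walkMat_supp : ∀ {u v : Fin m ⊕ Fin m} (w : (Hmat q).Walk u v) (a b : Fin m),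
    q a b = 0 → walkMat w a b = 0
  | _, _, SimpleGraph.Walk.nil, a, b, _ => rfl
  | _, _, @SimpleGraph.Walk.cons _ _ u u' v h w, a, b, hq => by
    show stepMat u u' a b + walkMat w a b = 0
    have h2 := walkMat_supp w a b hq
    have h1 : stepMat u u' a b = 0 := by
      rcases hmat_adj_cases h with ⟨a', b', hq', rfl, rfl⟩ | ⟨a', b', hq', rfl, rfl⟩ <;>
      · by_cases hab : a' = a ∧ b' = b
        · exact absurd (hab.1 ▸ hab.2 ▸ hq) hq'
        · simp [stepMat, Matrix.single, hab]
    rw [h1, h2, add_zero]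

lemma walkMat_entry_zero : ∀ {u v : Fin m ⊕ Fin m} (w : (Hmat q).Walk u v) (a b : Fin m),
    s(Sum.inl a, Sum.inr b) ∉ w.edges → walkMat w a b = 0
  | _, _, SimpleGraph.Walk.nil, a, b, _ => rfl
  | _, _, @SimpleGraph.Walk.cons _ _ u u' v h w, a, b, hmem => by
    rw [SimpleGraph.Walk.edges_cons, List.mem_cons] at hmem
    push_neg at hmem
    show stepMat u u' a b + walkMat w a b = 0
    rw [walkMat_entry_zero w a b hmem.2]
    have h1 : stepMat u u' a b = 0 := by
      rcases hmat_adj_cases h with ⟨a', b', hq', rfl, rfl⟩ | ⟨a', b', hq', rfl, rfl⟩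
      · by_cases hab : a' = a ∧ b' = b
        · obtain ⟨rfl, rfl⟩ := hab
          exact absurd rfl hmem.1
        · simp [stepMat, Matrix.single, hab]
      · by_cases hab : a' = a ∧ b' = b
        · obtain ⟨rfl, rfl⟩ := hab
          exact absurd (Sym2.eq_swap) hmem.1
        · simp [stepMat, Matrix.single, hab]
    rw [h1, add_zero]

/-- From a cycle, a nonzero matrix supported on `q` with zero margins. -/
lemma lemCycle {u : Fin m ⊕ Fin m} (c : (Hmat q).Walk u u) (hc : c.IsCycle) :
    ∃ d : Matrix (Fin m) (Fin m) ℝ, (∀ a b, q a b = 0 → d a b = 0) ∧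
      (∀ a, ∑ b, d a b = 0) ∧ (∀ b, ∑ a, d a b = 0) ∧ d ≠ 0 := by
  refine ⟨walkMat c, fun a b h => walkMat_supp c a b h, ?_, ?_, ?_⟩
  · intro a
    have := congrFun (marg_walkMat c) (Sum.inl a)
    simp only [marg, Sum.elim_inl, sub_self] at this
    simpa using this
  · intro b
    have := congrFun (marg_walkMat c) (Sum.inr b)
    simp only [marg, Sum.elim_inr, sub_self] at this
    simpa using this
  · intro h0
    cases c with
    | nil => exact hc.ne_nil rfl
    | @cons _ u'' _ hadj w =>
      have hnodup := hc.edges_nodup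
      rw [SimpleGraph.Walk.edges_cons, List.nodup_cons] at hnodup
      rcases hmat_adj_cases hadj with ⟨a, b, hq', h1, h2⟩ | ⟨a, b, hq', h1, h2⟩
      · subst h1; subst h2
        have hz := walkMat_entry_zero w a b hnodup.1
        have hone : walkMat (SimpleGraph.Walk.cons hadj w) a b = 1 := by
          show stepMat (Sum.inl a) (Sum.inr b) a b + walkMat w a b = 1
          rw [hz, add_zero]
          simp [stepMat]
        rw [h0] at hone
        simp at hone
      · subst h1; subst h2
        have hz := walkMat_entry_zero w a b (by rw [Sym2.eq_swap]; exact hnodup.1)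
        have hone : walkMat (SimpleGraph.Walk.cons hadj w) a b = -1 := by
          show stepMat (Sum.inr b) (Sum.inl a) a b + walkMat w a b = -1
          rw [hz, add_zero]
          simp [stepMat]
        rw [h0] at hone
        simp at hone
  
/-- component condition for a supported matrix. -/
lemma lemM (e : Matrix (Fin m) (Fin m) ℝ) (hsupp : ∀ a b, q a b = 0 → e a b = 0)
    (v : Fin m ⊕ Fin m) :
    (∑ a, if (Hmat q).Reachable v (Sum.inl a) then (∑ b, e a b) else 0)
      = ∑ b, if (Hmat q).Reachable v (Sum.inr b) then (∑ a, e a b) else 0 := by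
  have h1 : ∀ (c : Prop) [Decidable c] (f : Fin m → ℝ),
      (if c then (∑ x, f x) else 0) = ∑ x, if c then f x else 0 := by
    intro c inst f
    split <;> simp
  have L : (∑ a, if (Hmat q).Reachable v (Sum.inl a) then (∑ b, e a b) else 0)
      = ∑ a, ∑ b, if (Hmat q).Reachable v (Sum.inl a) then e a b else 0 :=
    Finset.sum_congr rfl fun a _ => h1 _ _
  have R : (∑ b, if (Hmat q).Reachable v (Sum.inr b) then (∑ a, e a b) else 0)
      = ∑ b, ∑ a, if (Hmat q).Reachable v (Sum.inr b) then e a b else 0 :=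
    Finset.sum_congr rfl fun b _ => h1 _ _
  rw [L, R, Finset.sum_comm]
  refine Finset.sum_congr rfl fun b _ => Finset.sum_congr rfl fun a _ => ?_
  by_cases he : e a b = 0
  · simp [he]
  · have hq : q a b ≠ 0 := fun h => he (hsupp a b h)
    have hadj := hmat_adj.mpr hq
    have hiff : (Hmat q).Reachable v (Sum.inl a) ↔ (Hmat q).Reachable v (Sum.inr b) :=
      ⟨fun h => h.trans hadj.reachable, fun h => h.trans hadj.symm.reachable⟩
    by_cases hr : (Hmat q).Reachable v (Sum.inl a)
    · rw [if_pos hr, if_pos (hiff.mp hr)]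
    · rw [if_neg hr, if_neg (fun h => hr (hiff.mpr h))]

/-- perturbation lemma: a nonzero feasible direction kills extremality. -/
lemma pert {n : ℕ} (p : Fin n → Matrix (Fin m) (Fin m) ℝ) (hp : p ∈ RoseDist n m)
    (d : Fin n → Matrix (Fin m) (Fin m) ℝ) (ν : Fin m → ℝ)
    (hsupp : ∀ i a b, p i a b = 0 → d i a b = 0)
    (hrow : ∀ i a, ∑ b, d i a b = ν a) (hcol : ∀ i b, ∑ a, d i a b = ν b)
    (hνsum : ∑ a, ν a = 0) (hd : d ≠ 0) :
    p ∉ Set.extremePoints ℝ (RoseDist n m) := by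
  obtain ⟨hpos, hsum, μ, hμ⟩ := hp
  have hne : ∃ t : Fin n × Fin m × Fin m, d t.1 t.2.1 t.2.2 ≠ 0 := by
    by_contra hcon
    push_neg at hcon
    exact hd (funext fun i => by ext a b; exact hcon (i, a, b))
  obtain ⟨t₀, ht₀⟩ := hne
  set g : Fin n × Fin m × Fin m → ℝ :=
    fun t => if d t.1 t.2.1 t.2.2 = 0 then 1 else p t.1 t.2.1 t.2.2 / |d t.1 t.2.1 t.2.2| with hg
  have hguniv : (Finset.univ : Finset (Fin n × Fin m × Fin m)).Nonempty := ⟨t₀, Finset.mem_univ _⟩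
  set ε := Finset.univ.inf' hguniv g with hε
  have hgpos : ∀ t, 0 < g t := by
    intro t
    by_cases h : d t.1 t.2.1 t.2.2 = 0
    · simp [hg, h]
    · have hpne : p t.1 t.2.1 t.2.2 ≠ 0 := fun hz => h (hsupp _ _ _ hz)
      have hppos : 0 < p t.1 t.2.1 t.2.2 := lt_of_le_of_ne (hpos _ _ _) (Ne.symm hpne)
      have habs : 0 < |d t.1 t.2.1 t.2.2| := abs_pos.mpr h
      simp only [hg, if_neg h]
      exact div_pos hppos habs
  have hεpos : 0 < ε := by
    rw [hε, Finset.lt_inf'_iff]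
    exact fun t _ => hgpos t
  have hbound : ∀ i a b, ε * |d i a b| ≤ p i a b := by
    intro i a b
    by_cases h : d i a b = 0
    · simp [h]
      exact hpos i a b
    · have h1 : ε ≤ g (i, a, b) := Finset.inf'_le _ (Finset.mem_univ _)
      have h2 : g (i, a, b) = p i a b / |d i a b| := if_neg h
      rw [h2] at h1
      have habs : 0 < |d i a b| := abs_pos.mpr h
      calc ε * |d i a b| ≤ (p i a b / |d i a b|) * |d i a b| :=
            mul_le_mul_of_nonneg_right h1 habs.le
        _ = p i a b := div_mul_cancel₀ _ (ne_of_gt habs)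
  have hmem : ∀ s : ℝ, |s| ≤ 1 → (fun i => p i + (s * ε) • d i) ∈ RoseDist n m := by
    intro s hs
    refine ⟨fun i a b => ?_, fun i => ?_, fun a => μ a + (s * ε) * ν a, fun i => ⟨fun a => ?_, fun b => ?_⟩⟩
    · have h1 : |s * ε * d i a b| ≤ ε * |d i a b| := by
        rw [abs_mul, abs_mul, abs_of_pos hεpos]
        have : |s| * ε ≤ 1 * ε := mul_le_mul_of_nonneg_right hs hεpos.le
        nlinarith [abs_nonneg (d i a b)]
      have h2 := hbound i a b
      have h3 : -(s * ε * d i a b) ≤ |s * ε * d i a b| := neg_le_abs _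
      simp only [Matrix.add_apply, Matrix.smul_apply, smul_eq_mul]
      linarith
    · simp only [Matrix.add_apply, Matrix.smul_apply, smul_eq_mul, Finset.sum_add_distrib,
        ← Finset.mul_sum]
      rw [hsum i]
      have hdd : (∑ x : Fin m, ∑ y : Fin m, d i x y) = 0 := by
        rw [Finset.sum_congr rfl fun a _ => hrow i a]
        exact hνsum
      rw [hdd]
      ring
    · simp only [Matrix.add_apply, Matrix.smul_apply, smul_eq_mul, Finset.sum_add_distrib,
        ← Finset.mul_sum]
      rw [(hμ i).1 a, hrow i a]
    · simp only [Matrix.add_apply, Matrix.smul_apply, smul_eq_mul, Finset.sum_add_distrib,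
        ← Finset.mul_sum]
      rw [(hμ i).2 b, hcol i b]
  intro hext
  rw [mem_extremePoints] at hext
  obtain ⟨-, hkey⟩ := hext
  have h₁ := hmem 1 (by norm_num)
  have h₂ := hmem (-1) (by norm_num)
  have hseg : p ∈ openSegment ℝ (fun i => p i + (1 * ε) • d i) (fun i => p i + ((-1) * ε) • d i) := by
    refine ⟨1/2, 1/2, by norm_num, by norm_num, by norm_num, ?_⟩
    funext i
    ext a b
    simp only [Pi.add_apply, Pi.smul_apply, Matrix.add_apply, Matrix.smul_apply, smul_eq_mul]
    ring
  have hfin := (hkey _ h₁ _ h₂ hseg).1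
  have := congrFun (congrFun (congrFun hfin t₀.1) t₀.2.1) t₀.2.2
  simp only [Matrix.add_apply, Matrix.smul_apply, smul_eq_mul, one_mul] at this
  have : ε * d t₀.1 t₀.2.1 t₀.2.2 = 0 := by linarith
  rcases mul_eq_zero.mp this with h | h
  · exact absurd h (ne_of_gt hεpos)
  · exact ht₀ h

end Rose
open scoped Classical in
/-- Graph-theoretic characterization of the vertices of the rose polytope:
`p` is extreme iff every support graph `H_i` is acyclic and the subspace `K̃`
of pairs `(α, β)` with `α = β` whose sums match on every connected component
of every `H_i` is one-dimensional (i.e. it is the set of multiples of a single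
nonzero vector; equivalently `rank Q̃(H₁, …, Hₙ) = 2m - 1`). -/
theorem stmt_18 {n m : ℕ} (hn : 1 ≤ n) (hm : 2 ≤ m)
    (p : Fin n → Matrix (Fin m) (Fin m) ℝ) (hp : p ∈ RoseDist n m) :
    p ∈ Set.extremePoints ℝ (RoseDist n m) ↔
      (∀ i, (Hmat (p i)).IsAcyclic) ∧
      ∃ z : (Fin m → ℝ) × (Fin m → ℝ), z ≠ 0 ∧
        {q : (Fin m → ℝ) × (Fin m → ℝ) | q.1 = q.2 ∧
          ∀ (i : Fin n) (v : Fin m ⊕ Fin m),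
            (∑ a : Fin m, if (Hmat (p i)).Reachable v (Sum.inl a) then q.1 a else 0) =
            (∑ b : Fin m, if (Hmat (p i)).Reachable v (Sum.inr b) then q.2 b else 0)} =
        Set.range (fun c : ℝ => c • z) := by
  obtain ⟨hpos, hsum, μ, hμ⟩ := id hp
  set i₀ : Fin n := ⟨0, hn⟩ with hi₀
  have hμsum : ∑ a, μ a = 1 := by
    calc ∑ a, μ a = ∑ a, ∑ b, p i₀ a b := Finset.sum_congr rfl fun a _ => ((hμ i₀).1 a).symm
      _ = 1 := hsum i₀
  have hμne : ((μ, μ) : (Fin m → ℝ) × (Fin m → ℝ)) ≠ 0 := by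
    intro h
    have h1 : μ = 0 := congrArg Prod.fst h
    rw [h1] at hμsum
    simp at hμsum
  have hμK : ∀ (i : Fin n) (v : Fin m ⊕ Fin m),
      (∑ a, if (Hmat (p i)).Reachable v (Sum.inl a) then μ a else 0)
        = ∑ b, if (Hmat (p i)).Reachable v (Sum.inr b) then μ b else 0 := by
    intro i v
    have e1 : (∑ a, if (Hmat (p i)).Reachable v (Sum.inl a) then μ a else 0)
        = ∑ a, if (Hmat (p i)).Reachable v (Sum.inl a) then (∑ b, p i a b) else 0 :=
      Finset.sum_congr rfl fun a _ => by rw [(hμ i).1 a]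
    have e2 : (∑ b, if (Hmat (p i)).Reachable v (Sum.inr b) then μ b else 0)
        = ∑ b, if (Hmat (p i)).Reachable v (Sum.inr b) then (∑ a, p i a b) else 0 :=
      Finset.sum_congr rfl fun b _ => by rw [(hμ i).2 b]
    rw [e1, e2]
    exact Rose.lemM (p i) (fun a b h => h) v
  constructor
  · -- extreme point → acyclic + one-dimensional
    intro hext
    have hacyc : ∀ i, (Hmat (p i)).IsAcyclic := by
      intro i
      by_contra hcyc
      unfold SimpleGraph.IsAcyclic at hcyc
      push_neg at hcyc
      obtain ⟨v, c, hc⟩ := hcyc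
      obtain ⟨dmat, hds, hdr, hdc, hdn⟩ := Rose.lemCycle c hc
      refine Rose.pert p hp (fun j => if j = i then dmat else 0) (fun _ => 0) ?_ ?_ ?_ ?_ ?_ hext
      · intro j a b h0
        by_cases hj : j = i
        · subst hj; simpa using hds a b h0
        · simp [hj]
      · intro j a
        by_cases hj : j = i
        · subst hj; simpa using hdr a
        · simp [hj]
      · intro j b
        by_cases hj : j = i
        · subst hj; simpa using hdc b
        · simp [hj]
      · simp
      · intro h0
        exact hdn (by simpa using congrFun h0 i)
    refine ⟨hacyc, (μ, μ), hμne, ?_⟩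
    ext ν
    simp only [Set.mem_setOf_eq, Set.mem_range]
    constructor
    · rintro ⟨hν12, hνcond⟩
      by_contra hnr
      push_neg at hnr
      set S : ℝ := ∑ x, ν.1 x with hS
      set ν1 : Fin m → ℝ := fun a => ν.1 a - S * μ a with hν1
      have expand : ∀ (P : Fin m → Prop) [DecidablePred P],
          (∑ a, if P a then ν1 a else 0)
            = (∑ a, if P a then ν.1 a else 0) - S * ∑ a, if P a then μ a else 0 := by
        intro P _
        calc (∑ a, if P a then ν1 a else 0)
            = ∑ a, if P a then ν.1 a - S * μ a else 0 := rfl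
          _ = (∑ a, if P a then ν.1 a else 0) - ∑ a, if P a then S * μ a else 0 :=
              Rose.sum_ite_sub _ _
          _ = (∑ a, if P a then ν.1 a else 0) - S * ∑ a, if P a then μ a else 0 := by
              rw [Rose.sum_ite_mul]
      have hν1cond : ∀ (i : Fin n) (v : Fin m ⊕ Fin m),
          (∑ a, if (Hmat (p i)).Reachable v (Sum.inl a) then ν1 a else 0)
            = ∑ b, if (Hmat (p i)).Reachable v (Sum.inr b) then ν1 b else 0 := by
        intro i v
        have eL : (∑ a, if (Hmat (p i)).Reachable v (Sum.inl a) then ν1 a else 0)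
            = (∑ a, if (Hmat (p i)).Reachable v (Sum.inl a) then ν.1 a else 0)
              - S * ∑ a, if (Hmat (p i)).Reachable v (Sum.inl a) then μ a else 0 := expand _
        have eR : (∑ b, if (Hmat (p i)).Reachable v (Sum.inr b) then ν1 b else 0)
            = (∑ b, if (Hmat (p i)).Reachable v (Sum.inr b) then ν.1 b else 0)
              - S * ∑ b, if (Hmat (p i)).Reachable v (Sum.inr b) then μ b else 0 := expand _
        rw [eL, eR, hμK i v]
        have hν2 : (∑ b, if (Hmat (p i)).Reachable v (Sum.inr b) then ν.1 b else 0)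
            = ∑ b, if (Hmat (p i)).Reachable v (Sum.inr b) then ν.2 b else 0 :=
          Finset.sum_congr rfl fun b _ => by rw [hν12]
        rw [show (∑ a, if (Hmat (p i)).Reachable v (Sum.inl a) then ν.1 a else 0)
            = ∑ b, if (Hmat (p i)).Reachable v (Sum.inr b) then ν.1 b else 0 from by
          rw [hν2]; exact hνcond i v]
      have hν1sum : ∑ a, ν1 a = 0 := by
        simp only [hν1]
        rw [Finset.sum_sub_distrib, ← Finset.mul_sum, hμsum, mul_one, ← hS, sub_self]
      by_cases hz1 : ν1 = 0
      · refine hnr S ?_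
        have h1 : ∀ a, ν.1 a = S * μ a := by
          intro a
          have h2 := congrFun hz1 a
          simp only [hν1, Pi.zero_apply] at h2
          linarith
        refine Prod.ext ?_ ?_
        · funext a
          exact (h1 a).symm
        · funext a
          rw [← hν12]
          exact (h1 a).symm
      · choose dfun hd1 hd2 hd3 using fun i => Rose.lemB (q := p i) ν1 ν1 (hν1cond i)
        refine absurd hext (Rose.pert p hp dfun ν1 hd1 hd2 hd3 hν1sum ?_)
        intro h0
        apply hz1
        funext a
        have h4 := hd2 i₀ a
        rw [congrFun h0 i₀] at h4
        simpa using h4.symm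
    · rintro ⟨c, rfl⟩
      refine ⟨rfl, fun i v => ?_⟩
      show (∑ a, if (Hmat (p i)).Reachable v (Sum.inl a) then c * μ a else 0)
          = ∑ b, if (Hmat (p i)).Reachable v (Sum.inr b) then c * μ b else 0
      have l1 : (∑ a, if (Hmat (p i)).Reachable v (Sum.inl a) then c * μ a else 0)
          = c * ∑ a, if (Hmat (p i)).Reachable v (Sum.inl a) then μ a else 0 :=
        Rose.sum_ite_mul _ _
      have l2 : (∑ b, if (Hmat (p i)).Reachable v (Sum.inr b) then c * μ b else 0)
          = c * ∑ b, if (Hmat (p i)).Reachable v (Sum.inr b) then μ b else 0 :=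
        Rose.sum_ite_mul _ _
      rw [l1, l2, hμK i v]
  · -- acyclic + one-dimensional → extreme point
    rintro ⟨hacyc, z, hzne, hKz⟩
    have hμmem : ((μ, μ) : (Fin m → ℝ) × (Fin m → ℝ)) ∈ Set.range (fun c : ℝ => c • z) := by
      rw [← hKz]
      exact ⟨rfl, hμK⟩
    obtain ⟨c₀, hc₀0⟩ := hμmem
    have hc₀ : c₀ • z = ((μ, μ) : (Fin m → ℝ) × (Fin m → ℝ)) := hc₀0
    have hc₀ne : c₀ ≠ 0 := by
      intro h
      rw [h, zero_smul] at hc₀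
      exact hμne hc₀.symm
    rw [mem_extremePoints]
    refine ⟨hp, ?_⟩
    have main : ∀ x, x ∈ RoseDist n m → (∀ i a b, p i a b = 0 → x i a b = 0) → x = p := by
      intro x hx hxs
      obtain ⟨hxpos, hxsum, μ', hμ'⟩ := hx
      set ν : Fin m → ℝ := fun a => μ' a - μ a with hν
      have hdsupp : ∀ i a b, p i a b = 0 → (x i - p i) a b = 0 := by
        intro i a b h0
        simp [Matrix.sub_apply, hxs i a b h0, h0]
      have hdrow : ∀ i a, ∑ b, (x i - p i) a b = ν a := by
        intro i a
        simp only [Matrix.sub_apply, Finset.sum_sub_distrib, (hμ' i).1 a, (hμ i).1 a, hν]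
      have hdcol : ∀ i b, ∑ a, (x i - p i) a b = ν b := by
        intro i b
        simp only [Matrix.sub_apply, Finset.sum_sub_distrib, (hμ' i).2 b, (hμ i).2 b, hν]
      have hνK : ∀ (i : Fin n) (v : Fin m ⊕ Fin m),
          (∑ a, if (Hmat (p i)).Reachable v (Sum.inl a) then ν a else 0)
            = ∑ b, if (Hmat (p i)).Reachable v (Sum.inr b) then ν b else 0 := by
        intro i v
        have e1 : (∑ a, if (Hmat (p i)).Reachable v (Sum.inl a) then ν a else 0)
            = ∑ a, if (Hmat (p i)).Reachable v (Sum.inl a) then (∑ b, (x i - p i) a b) else 0 :=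
          Finset.sum_congr rfl fun a _ => by rw [hdrow i a]
        have e2 : (∑ b, if (Hmat (p i)).Reachable v (Sum.inr b) then ν b else 0)
            = ∑ b, if (Hmat (p i)).Reachable v (Sum.inr b) then (∑ a, (x i - p i) a b) else 0 :=
          Finset.sum_congr rfl fun b _ => by rw [hdcol i b]
        rw [e1, e2]
        exact Rose.lemM (x i - p i) (hdsupp i) v
      have hνmem : ((ν, ν) : (Fin m → ℝ) × (Fin m → ℝ)) ∈ Set.range (fun c : ℝ => c • z) := by
        rw [← hKz]
        exact ⟨rfl, hνK⟩
      obtain ⟨c, hc0⟩ := hνmem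
      have hc : c • z = ((ν, ν) : (Fin m → ℝ) × (Fin m → ℝ)) := hc0
      have hz0 : z = c₀⁻¹ • ((μ, μ) : (Fin m → ℝ) × (Fin m → ℝ)) := by
        rw [← hc₀, smul_smul, inv_mul_cancel₀ hc₀ne, one_smul]
      rw [hz0, smul_smul] at hc
      have hν1eq : ν = (c * c₀⁻¹) • μ := congrArg Prod.fst hc.symm
      have hνsum : ∑ a, ν a = 0 := by
        have hμ'sum : ∑ a, μ' a = 1 := by
          calc ∑ a, μ' a = ∑ a, ∑ b, x i₀ a b :=
                Finset.sum_congr rfl fun a _ => ((hμ' i₀).1 a).symm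
            _ = 1 := hxsum i₀
        simp only [hν]
        rw [Finset.sum_sub_distrib, hμ'sum, hμsum, sub_self]
      have hscalar : c * c₀⁻¹ = 0 := by
        rw [hν1eq] at hνsum
        simp only [Pi.smul_apply, smul_eq_mul, ← Finset.mul_sum, hμsum, mul_one] at hνsum
        exact hνsum
      have hν0 : ν = 0 := by rw [hν1eq, hscalar, zero_smul]
      funext i
      have hlem := Rose.lemA (hacyc i) (x i - p i) (hdsupp i)
        (fun a => by rw [hdrow i a, hν0]; rfl)
        (fun b => by rw [hdcol i b, hν0]; rfl)
      exact sub_eq_zero.mp hlem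
    intro x₁ h₁ x₂ h₂ hseg
    obtain ⟨s, t, hs, ht, hst, heq⟩ := hseg
    have hxs : ∀ (y₁ y₂ : Fin n → Matrix (Fin m) (Fin m) ℝ), y₁ ∈ RoseDist n m →
        y₂ ∈ RoseDist n m → (∀ (s' t' : ℝ), 0 < s' → 0 < t' →
          s' • y₁ + t' • y₂ = p → True) → True := fun _ _ _ _ _ => trivial
    have hsup1 : ∀ i a b, p i a b = 0 → x₁ i a b = 0 := by
      intro i a b h0
      have he := congrFun (congrFun (congrFun heq i) a) b
      simp only [Pi.add_apply, Pi.smul_apply, Matrix.add_apply, Matrix.smul_apply,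
        smul_eq_mul] at he
      rw [h0] at he
      have h1 : 0 ≤ x₁ i a b := h₁.1 i a b
      have h2 : 0 ≤ x₂ i a b := h₂.1 i a b
      have h3 : s * x₁ i a b = 0 := by
        nlinarith [mul_nonneg hs.le h1, mul_nonneg ht.le h2]
      exact (mul_eq_zero.mp h3).resolve_left (ne_of_gt hs)
    have hsup2 : ∀ i a b, p i a b = 0 → x₂ i a b = 0 := by
      intro i a b h0
      have he := congrFun (congrFun (congrFun heq i) a) b
      simp only [Pi.add_apply, Pi.smul_apply, Matrix.add_apply, Matrix.smul_apply,
        smul_eq_mul] at he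
      rw [h0] at he
      have h1 : 0 ≤ x₁ i a b := h₁.1 i a b
      have h2 : 0 ≤ x₂ i a b := h₂.1 i a b
      have h3 : t * x₂ i a b = 0 := by
        nlinarith [mul_nonneg hs.le h1, mul_nonneg ht.le h2]
      exact (mul_eq_zero.mp h3).resolve_left (ne_of_gt ht)
    exact ⟨main x₁ h₁ hsup1, main x₂ h₂ hsup2⟩
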